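/- Let c, θ ∈ ℝ, σ > 0, α, β > 0, let Z be a standard Gaussian random variable, and let V be a Gamma(α, β) distributed random variable independent of Z. Then the characteristic function of the Variance Gamma variable X = c + θV + σ√V · Z is ψ_X(t) = exp(ict)(1 − iθt/β + t²σ²/(2β))^{-α} for all real t, where the complex power is the principal branch. -/

import Mathlib

open MeasureTheory ProbabilityTheory Complex
open MeasureTheory Complex Set Filter ProbabilityTheory
open scoped NNReal ENNReal
set_option maxHeartbeats 1000000


namespace VGaux

lemma norm_aux {α : ℝ} {x : ℝ} (hx : 0 < x) (w : ℂ) :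
    ‖(x:ℂ) ^ ((α:ℂ) - 1) * Complex.exp (-(w * x))‖ = x ^ (α - 1) * Real.exp (-(w.re * x)) := by
  rw [norm_mul, norm_cpow_eq_rpow_re_of_pos hx,
    Complex.norm_exp]
  simp [Complex.mul_re]

lemma integrable_bound {s b : ℝ} (hs : -1 < s) (hb : 0 < b) :
    IntegrableOn (fun x : ℝ => x ^ s * Real.exp (-(b * x))) (Ioi 0) := by
  have h := integrableOn_rpow_mul_exp_neg_mul_rpow hs zero_lt_one hb
  simpa [Real.rpow_one, neg_mul] using h

lemma meas_aux (α : ℝ) (w : ℂ) :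
    AEStronglyMeasurable (fun x : ℝ => (x:ℂ) ^ ((α:ℂ) - 1) * Complex.exp (-(w * x)))
      (volume.restrict (Ioi 0)) := by
  apply Measurable.aestronglyMeasurable
  exact ((Complex.measurable_ofReal.pow_const _).mul
    ((Complex.measurable_ofReal.const_mul w).neg.cexp))

end VGaux

namespace VGaux

lemma integrableOn_F {α : ℝ} (hα : 0 < α) {w : ℂ} (hw : 0 < w.re) :
    IntegrableOn (fun x : ℝ => (x:ℂ) ^ ((α:ℂ) - 1) * Complex.exp (-(w * x))) (Ioi 0) := by
  refine (integrable_bound (s := α - 1) (by linarith) hw).mono' (meas_aux α w) ?_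
  filter_upwards [ae_restrict_mem measurableSet_Ioi] with x hx
  rw [norm_aux hx]

lemma hasDerivAt_F {α : ℝ} (hα : 0 < α) {w : ℂ} (hw : 0 < w.re) :
    HasDerivAt (fun z : ℂ => ∫ x : ℝ in Ioi 0, (x:ℂ) ^ ((α:ℂ) - 1) * Complex.exp (-(z * x)))
      (∫ x : ℝ in Ioi 0, (x:ℂ) ^ ((α:ℂ) - 1) * (-(x:ℂ)) * Complex.exp (-(w * x))) w := by
  set ε := w.re / 2 with hεdef
  have hε : 0 < ε := by positivity
  have hball : ∀ z ∈ Metric.ball w ε, ε ≤ z.re := by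
    intro z hz
    have h1 : |(z - w).re| ≤ ‖z - w‖ := Complex.abs_re_le_norm _
    rw [Metric.mem_ball, Complex.dist_eq] at hz
    have : |z.re - w.re| < ε := lt_of_le_of_lt (by simpa using h1) hz
    have := abs_lt.mp this
    simp only [hεdef] at *
    linarith [this.1]
  have key := hasDerivAt_integral_of_dominated_loc_of_deriv_le
    (μ := volume.restrict (Ioi 0)) (x₀ := w)
    (F := fun z (x : ℝ) => (x:ℂ) ^ ((α:ℂ) - 1) * Complex.exp (-(z * x)))
    (F' := fun z (x : ℝ) => (x:ℂ) ^ ((α:ℂ) - 1) * (-(x:ℂ)) * Complex.exp (-(z * x)))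
    (bound := fun x : ℝ => x ^ α * Real.exp (-(ε * x))) (Metric.ball_mem_nhds w hε)
    (Filter.Eventually.of_forall fun z => meas_aux α z)
    (integrableOn_F hα hw)
    (by
      apply Measurable.aestronglyMeasurable
      exact ((Complex.measurable_ofReal.pow_const _).mul Complex.measurable_ofReal.neg).mul
        ((Complex.measurable_ofReal.const_mul w).neg.cexp))
    (by
      filter_upwards [ae_restrict_mem measurableSet_Ioi] with x hx z hz
      have hx0 : (0:ℝ) < x := hx
      have : ‖(x:ℂ) ^ ((α:ℂ) - 1) * (-(x:ℂ)) * Complex.exp (-(z * x))‖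
          = x ^ (α - 1) * x * Real.exp (-(z.re * x)) := by
        rw [norm_mul, norm_mul,
          norm_cpow_eq_rpow_re_of_pos hx0, Complex.norm_exp]
        simp [Complex.mul_re, abs_of_pos hx0]
      have h1 : x ^ (α - 1) * x = x ^ α := by
        rw [← Real.rpow_add_one hx0.ne']
        ring_nf
      rw [this, h1]
      gcongr
      · exact hball z hz
    )
    (integrable_bound (by linarith) hε)
    (by
      filter_upwards [ae_restrict_mem measurableSet_Ioi] with x hx z hz
      have : HasDerivAt (fun z : ℂ => -(z * x)) (-(x:ℂ)) z := by
        have h := ((hasDerivAt_id' z).mul_const (x:ℂ)).neg; rw [one_mul] at h; exact h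
      have h2 := (this.cexp).const_mul ((x:ℂ) ^ ((α:ℂ) - 1))
      convert h2 using 1
      · rfl
      ring)
  exact key.2

end VGaux

namespace VGaux

lemma integral_cexp_gamma {α : ℝ} (hα : 0 < α) {w : ℂ} (hw : 0 < w.re) :
    ∫ x : ℝ in Ioi 0, (x:ℂ) ^ ((α:ℂ) - 1) * Complex.exp (-(w * x))
      = w ^ (-(α:ℂ)) * Complex.Gamma α := by
  set U : Set ℂ := {z : ℂ | 0 < z.re} with hU
  have hUopen : IsOpen U := isOpen_lt continuous_const Complex.continuous_re
  set F : ℂ → ℂ := fun z => ∫ x : ℝ in Ioi 0, (x:ℂ) ^ ((α:ℂ) - 1) * Complex.exp (-(z * x))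
  set G : ℂ → ℂ := fun z => z ^ (-(α:ℂ)) * Complex.Gamma α
  have hFd : DifferentiableOn ℂ F U := fun z hz =>
    ((hasDerivAt_F hα hz).differentiableAt).differentiableWithinAt
  have hGd : DifferentiableOn ℂ G U := by
    intro z hz
    have h := ((hasDerivAt_id z).cpow_const (c := -(α:ℂ))
      (Complex.mem_slitPlane_iff.mpr (Or.inl hz))).differentiableAt
    exact (h.mul_const _).differentiableWithinAt
  have heq : EqOn F G U := by
    refine (hFd.analyticOnNhd hUopen).eqOn_of_preconnected_of_frequently_eq
      (hGd.analyticOnNhd hUopen) ((convex_halfSpace_re_gt 0).isPreconnected)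
      (show (1:ℂ) ∈ U by simp [hU]) ?_
    have htend : Filter.Tendsto (fun n : ℕ => ((1 + (n+1 : ℝ)⁻¹ : ℝ) : ℂ)) Filter.atTop
        (nhdsWithin 1 {(1:ℂ)}ᶜ) := by
      rw [tendsto_nhdsWithin_iff]
      constructor
      · have : Filter.Tendsto (fun n : ℕ => (1 + (n+1 : ℝ)⁻¹ : ℝ)) Filter.atTop (nhds 1) := by
          have h0 : Filter.Tendsto (fun n : ℕ => ((n+1 : ℝ))⁻¹) Filter.atTop (nhds 0) :=
            tendsto_one_div_add_atTop_nhds_zero_nat.congr (by intro n; rw [one_div])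
          simpa using tendsto_const_nhds.add h0
        have := (Complex.continuous_ofReal.tendsto 1).comp this
        exact this
      · refine Filter.Eventually.of_forall fun n => ?_
        simp only [Set.mem_compl_iff, Set.mem_singleton_iff]
        intro h
        have : (1 + (n+1 : ℝ)⁻¹ : ℝ) = 1 := by exact_mod_cast h
        have hpos : (0:ℝ) < ((n:ℝ)+1)⁻¹ := by positivity
        linarith
    refine htend.frequently (Filter.Frequently.of_forall fun n => ?_)
    set r : ℝ := 1 + (n+1 : ℝ)⁻¹ with hr
    have hrpos : 0 < r := by positivity
    have hre : (0:ℝ) < ((α:ℂ)).re := by simpa using hα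
    have hmain := integral_cpow_mul_exp_neg_mul_Ioi (a := (α:ℂ)) hre hrpos
    show F r = G r
    have : F r = (1 / (r:ℂ)) ^ (α:ℂ) * Complex.Gamma α := hmain
    rw [this]
    congr 1
    rw [one_div, inv_cpow _ _ (by rw [Complex.arg_ofReal_of_nonneg hrpos.le]; exact Real.pi_ne_zero.symm), ← cpow_neg]
  exact heq hw

end VGaux


namespace VGaux

lemma integral_gaussianReal_cexp (u d : ℂ) :
    ∫ z : ℝ, Complex.exp (u * z + d) ∂(gaussianReal 0 1)
      = Complex.exp (d + u ^ 2 / 2) := by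
  rw [gaussianReal_of_var_ne_zero 0 one_ne_zero]
  rw [show gaussianPDF 0 1 = fun x => ((Real.toNNReal (gaussianPDFReal 0 1 x) : ℝ≥0) : ℝ≥0∞)
    from rfl]
  rw [integral_withDensity_eq_integral_smul (measurable_gaussianPDFReal 0 1).real_toNNReal]
  have hpt : ∀ z : ℝ, (Real.toNNReal (gaussianPDFReal 0 1 z)) • Complex.exp (u * z + d)
      = ((Real.sqrt (2 * Real.pi) : ℝ) : ℂ)⁻¹
        * Complex.exp (-(1/2 : ℂ) * z ^ 2 + u * z + d) := by
    intro z
    rw [NNReal.smul_def, Real.coe_toNNReal _ (gaussianPDFReal_nonneg 0 1 z),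
      Complex.real_smul, gaussianPDFReal]
    push_cast
    rw [mul_assoc, ← Complex.exp_add]
    have h0 : (2 * Real.pi * 1 : ℝ) = 2 * Real.pi := by ring
    rw [h0]
    congr 2
    ring
  simp_rw [hpt]
  rw [integral_const_mul, integral_cexp_quadratic (by norm_num : (-(1/2):ℂ).re < 0) u d]
  have h1 : ((Real.pi : ℂ)) / -(-(1/2):ℂ) = ((2 * Real.pi : ℝ) : ℂ) := by
    push_cast; field_simp
  rw [h1]
  have h2 : ((2 * Real.pi : ℝ) : ℂ) ^ (1/2 : ℂ) = ((Real.sqrt (2 * Real.pi) : ℝ) : ℂ) := by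
    rw [Real.sqrt_eq_rpow, Complex.ofReal_cpow (by positivity)]
    norm_num
  rw [h2, ← mul_assoc, inv_mul_cancel₀ (by
    simp only [ne_eq, Complex.ofReal_eq_zero]
    positivity), one_mul]
  congr 1
  ring_nf

end VGaux

namespace VGaux


lemma integral_gammaMeasure_cexp {α β : ℝ} (hα : 0 < α) (hβ : 0 < β) {s : ℂ}
    (hs : s.re < β) :
    ∫ v : ℝ, Complex.exp (s * v) ∂(gammaMeasure α β)
      = ((β:ℂ) - s) ^ (-(α:ℂ)) * ((β : ℝ) ^ (α : ℝ) : ℝ) := by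
  rw [gammaMeasure]
  rw [show gammaPDF α β = fun x => ((Real.toNNReal (gammaPDFReal α β x) : ℝ≥0) : ℝ≥0∞) from rfl]
  rw [integral_withDensity_eq_integral_smul (measurable_gammaPDFReal α β).real_toNNReal]
  rw [← setIntegral_eq_integral_of_ae_compl_eq_zero (s := Ioi (0:ℝ)) ?hz]
  case hz =>
    filter_upwards [compl_mem_ae_iff.mpr (Real.volume_singleton (a := (0:ℝ)))] with x hx hx'
    simp only [mem_compl_iff, mem_singleton_iff] at hx
    have hxneg : x < 0 := by
      rcases lt_trichotomy x 0 with h | h | h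
      · exact h
      · exact absurd h hx
      · exact absurd h hx'
    rw [show gammaPDFReal α β x = 0 from by
      simp [gammaPDFReal, not_le.mpr hxneg]]
    simp
  have hcong : ∀ x ∈ Ioi (0:ℝ),
      (Real.toNNReal (gammaPDFReal α β x)) • Complex.exp (s * x)
      = (((β ^ α / Real.Gamma α : ℝ)) : ℂ)
        * ((x:ℂ) ^ ((α:ℂ) - 1) * Complex.exp (-(((β:ℂ) - s) * x))) := by
    intro x hx
    have hx0 : (0:ℝ) < x := hx
    rw [NNReal.smul_def, Real.coe_toNNReal _ (gammaPDFReal_nonneg hα hβ x),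
      Complex.real_smul, gammaPDFReal, if_pos hx0.le]
    push_cast
    rw [Complex.ofReal_cpow hx0.le]
    push_cast
    rw [mul_assoc, ← Complex.exp_add,
      show -((β:ℂ) * x) + s * x = -(((β:ℂ) - s) * x) from by ring]
    ring
  rw [setIntegral_congr_fun measurableSet_Ioi hcong, integral_const_mul,
    integral_cexp_gamma hα (w := (β:ℂ) - s) (by simpa using sub_pos.mpr hs)]
  rw [Complex.Gamma_ofReal]
  have hG : (Real.Gamma α : ℂ) ≠ 0 := by
    simp only [ne_eq, Complex.ofReal_eq_zero]
    exact (Real.Gamma_pos_of_pos hα).ne'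
  push_cast
  field_simp

end VGaux


namespace VGaux


lemma ofReal_mul_cpow {r : ℝ} (hr : 0 < r) {z : ℂ} (hz : z ≠ 0) (s : ℂ) :
    ((r:ℂ) * z) ^ s = (r:ℂ) ^ s * z ^ s := by
  rw [Complex.cpow_def_of_ne_zero (mul_ne_zero (Complex.ofReal_ne_zero.2 hr.ne') hz),
    Complex.cpow_def_of_ne_zero (Complex.ofReal_ne_zero.2 hr.ne'),
    Complex.cpow_def_of_ne_zero hz, Complex.log_ofReal_mul hr hz, add_mul, Complex.exp_add,
    Complex.ofReal_log hr.le]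

lemma gammaMeasure_ae_nonneg (α β : ℝ) : ∀ᵐ v ∂(gammaMeasure α β), 0 ≤ v := by
  rw [ae_iff]
  have h : {v : ℝ | ¬ 0 ≤ v} = Iio 0 := by ext v; simp [not_le]
  rw [h, gammaMeasure, withDensity_apply _ measurableSet_Iio,
    setLIntegral_congr_fun measurableSet_Iio (fun x hx => gammaPDF_of_neg hx),
    lintegral_zero]

end VGaux


open VGaux

/-- The characteristic function of the Variance Gamma variable
`X = c + θV + σ√V ⬝ Z`, where `Z` is standard Gaussian and `V` is an independent
`Gamma(α, β)` variable, is `t ↦ exp(ict)(1 - iθt/β + t²σ²/(2β))^(-α)` (principal branch). -/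
theorem charFun_varianceGamma_shifted
    {Ω : Type*} [MeasurableSpace Ω] (P : Measure Ω) [IsProbabilityMeasure P]
    (α β c θ σ : ℝ) (hα : 0 < α) (hβ : 0 < β) (hσ : 0 < σ)
    (V Z : Ω → ℝ) (hVm : Measurable V) (hZm : Measurable Z)
    (hV : Measure.map V P = gammaMeasure α β)
    (hZ : Measure.map Z P = gaussianReal 0 1)
    (hindep : IndepFun V Z P) (t : ℝ) :
    ∫ ω, Complex.exp (Complex.I * t * (c + θ * V ω + σ * Real.sqrt (V ω) * Z ω)) ∂P
      = Complex.exp (Complex.I * c * t)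
        * ((1 : ℂ) - Complex.I * θ * t / β + t ^ 2 * σ ^ 2 / (2 * β)) ^ (-(α : ℂ)) := by
  haveI : IsProbabilityMeasure (gammaMeasure α β) := isProbabilityMeasure_gammaMeasure hα hβ
  set g : ℝ × ℝ → ℂ := fun p =>
    Complex.exp (Complex.I * t * (c + θ * p.1 + σ * Real.sqrt p.1 * p.2)) with hg
  have hgc : Continuous g := by
    apply Complex.continuous_exp.comp
    fun_prop
  have hmap : Measure.map (fun ω => (V ω, Z ω)) P
      = (gammaMeasure α β).prod (gaussianReal 0 1) := by
    rw [← hV, ← hZ]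
    exact (ProbabilityTheory.indepFun_iff_map_prod_eq_prod_map_map hVm.aemeasurable
      hZm.aemeasurable).mp hindep
  have hLHS : ∫ ω, Complex.exp (Complex.I * t * (c + θ * V ω + σ * Real.sqrt (V ω) * Z ω)) ∂P
      = ∫ p, g p ∂((gammaMeasure α β).prod (gaussianReal 0 1)) := by
    rw [← hmap, integral_map (hVm.prodMk hZm).aemeasurable hgc.aestronglyMeasurable]
  rw [hLHS]
  have hnorm : ∀ p : ℝ × ℝ, ‖g p‖ = 1 := by
    intro p
    simp only [hg]
    simp only [Complex.norm_exp]
    rw [show (Complex.I * t * (c + θ * p.1 + σ * Real.sqrt p.1 * p.2)).re = 0 by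
      simp [Complex.mul_re, Complex.mul_im]]
    exact Real.exp_zero
  have hint : Integrable g ((gammaMeasure α β).prod (gaussianReal 0 1)) := by
    refine (integrable_const (1:ℝ)).mono' hgc.aestronglyMeasurable ?_
    exact Eventually.of_forall fun p => (hnorm p).le
  rw [integral_prod g hint]
  set s : ℂ := Complex.I * t * θ - t ^ 2 * σ ^ 2 / 2 with hs
  have hinner : ∀ v : ℝ, 0 ≤ v → (∫ z, g (v, z) ∂(gaussianReal 0 1))
      = Complex.exp (Complex.I * c * t) * Complex.exp (s * v) := by
    intro v hv
    have hpt : ∀ z : ℝ, g (v, z)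
        = Complex.exp ((Complex.I * t * σ * Real.sqrt v) * z + Complex.I * t * (c + θ * v)) := by
      intro z
      simp only [hg]
      congr 1
      ring
    rw [integral_congr_ae (Eventually.of_forall hpt), integral_gaussianReal_cexp,
      ← Complex.exp_add]
    congr 1
    have hsq : ((Real.sqrt v : ℝ) : ℂ) ^ 2 = (v : ℂ) := by
      rw [← Complex.ofReal_pow, Real.sq_sqrt hv]
    rw [hs]
    have : (Complex.I * t * σ * Real.sqrt v) ^ 2
        = Complex.I ^ 2 * (t:ℂ) ^ 2 * (σ:ℂ) ^ 2 * ((Real.sqrt v : ℝ) : ℂ) ^ 2 := by ring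
    rw [this, hsq, Complex.I_sq]
    ring
  have houter : ∫ v, (∫ z, g (v, z) ∂(gaussianReal 0 1)) ∂(gammaMeasure α β)
      = Complex.exp (Complex.I * c * t)
        * ∫ v, Complex.exp (s * v) ∂(gammaMeasure α β) := by
    rw [← integral_const_mul]
    refine integral_congr_ae ?_
    filter_upwards [gammaMeasure_ae_nonneg α β] with v hv
    rw [hinner v hv]
  have hsre : s.re = -(t ^ 2 * σ ^ 2) / 2 := by
    rw [hs]
    simp [Complex.mul_re, Complex.mul_im, ← Complex.ofReal_pow]
    ring
  rw [houter, integral_gammaMeasure_cexp hα hβ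
    (by rw [hsre]; nlinarith [sq_nonneg (t * σ)])]
  congr 1
  -- algebra: ((β:ℂ) - s)^(-α) * ↑(β^α) = base^(-α)
  have hwne : ((β:ℂ) - s) ≠ 0 := by
    intro h
    have h2 : ((β:ℂ) - s).re = 0 := by rw [h]; simp
    rw [Complex.sub_re, hsre, Complex.ofReal_re] at h2
    nlinarith [sq_nonneg (t * σ)]
  have hbase : (1 : ℂ) - Complex.I * θ * t / β + t ^ 2 * σ ^ 2 / (2 * β)
      = ((β⁻¹ : ℝ) : ℂ) * ((β:ℂ) - s) := by
    rw [hs]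
    have hb0 : (β:ℂ) ≠ 0 := Complex.ofReal_ne_zero.2 hβ.ne'
    push_cast
    field_simp
    ring
  rw [hbase, ofReal_mul_cpow (by positivity) hwne]
  have hb1 : ((β⁻¹ : ℝ) : ℂ) ^ (-(α:ℂ)) = (((β : ℝ) ^ (α : ℝ) : ℝ) : ℂ) := by
    rw [show (-(α:ℂ)) = ((-α : ℝ) : ℂ) by push_cast; ring,
      ← Complex.ofReal_cpow (by positivity) (-α)]
    congr 1
    rw [Real.rpow_neg (by positivity), Real.inv_rpow hβ.le, inv_inv]
  rw [hb1]
  ring
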